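/- Let P_π be a weighted poset on m elements of total weight n, G_π the induced digraph on n vertices, and φ_π : 𝔽₂^m → 𝔽₂ⁿ the associated map. If C ⊆ 𝔽₂^m is an r-packing P_π-code, then its image C^{φ_π} = {u^{φ_π} : u ∈ C} ⊆ 𝔽₂ⁿ is an r-packing G_π-code. -/

import Mathlib

open Classical

noncomputable def wtP {α : Type*} [Fintype α] (le : α → α → Prop) (π : α → ℕ)
    (x : α → ZMod 2) : ℕ :=
  ∑ j ∈ Finset.univ.filter (fun j => ∃ i, x i ≠ 0 ∧ le j i), π j

noncomputable def dP {α : Type*} [Fintype α] (le : α → α → Prop) (π : α → ℕ)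
    (x y : α → ZMod 2) : ℕ :=
  wtP le π (x - y)

noncomputable def wtG {V : Type*} [Fintype V] (E : V → V → Prop) (x : V → ZMod 2) : ℕ :=
  (Finset.univ.filter (fun v => ∃ u, x u ≠ 0 ∧ Relation.ReflTransGen E u v)).card

noncomputable def dG {V : Type*} [Fintype V] (E : V → V → Prop) (x y : V → ZMod 2) : ℕ :=
  wtG E (x - y)

def IsPacking {β : Type*} (d : β → β → ℕ) (C : Set β) (r : ℕ) : Prop :=
  ∀ c₁ ∈ C, ∀ c₂ ∈ C, c₁ ≠ c₂ → ∀ x, ¬(d c₁ x ≤ r ∧ d c₂ x ≤ r)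

def Gpi {m : ℕ} (le : Fin m → Fin m → Prop) (π : Fin m → ℕ) :
    (Σ a : Fin m, Fin (π a)) → (Σ a : Fin m, Fin (π a)) → Prop :=
  fun u v =>
    (u.2.val = 0 ∧ v.2.val = 0 ∧ u.1 ≠ v.1 ∧ le v.1 u.1) ∨
    (u.1 = v.1 ∧ u.2.val ≠ v.2.val ∧ (u.2.val + 1) % π u.1 = v.2.val)

def phiPi {m : ℕ} (π : Fin m → ℕ) (u : Fin m → ZMod 2) :
    (Σ a : Fin m, Fin (π a)) → ZMod 2 :=
  fun v => if v.2.val = 0 then u v.1 else 0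

theorem stmt_7 {m : ℕ} (le : Fin m → Fin m → Prop)
    (hrefl : ∀ a, le a a)
    (hantisymm : ∀ a b, le a b → le b a → a = b)
    (htrans : ∀ a b c, le a b → le b c → le a c)
    (π : Fin m → ℕ) (hπ : ∀ a, 0 < π a)
    (C : Set (Fin m → ZMod 2)) (r : ℕ)
    (hC : IsPacking (dP le π) C r) :
    IsPacking (dG (Gpi le π)) (phiPi π '' C) r := by
  rintro _ ⟨c₁, hc₁, rfl⟩ _ ⟨c₂, hc₂, rfl⟩ hne x ⟨h1, h2⟩
  have hcne : c₁ ≠ c₂ := by rintro rfl; exact hne rfl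
  set ψ : Fin m → ZMod 2 := fun a => x ⟨a, ⟨0, hπ a⟩⟩ with hψ
  have key : ∀ c, dP le π c ψ ≤ dG (Gpi le π) (phiPi π c) x := by
    intro c
    unfold dP dG wtP wtG
    set y : (Σ a : Fin m, Fin (π a)) → ZMod 2 := phiPi π c - x with hy
    have hy0 : ∀ a : Fin m, (c - ψ) a = y ⟨a, ⟨0, hπ a⟩⟩ := by
      intro a
      simp [hy, hψ, phiPi, Pi.sub_apply]
    set S := Finset.univ.filter (fun j => ∃ i, (c - ψ) i ≠ 0 ∧ le j i) with hS
    have hsub : S.sigma (fun j => (Finset.univ : Finset (Fin (π j)))) ⊆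
        Finset.univ.filter (fun v => ∃ w, y w ≠ 0 ∧ Relation.ReflTransGen (Gpi le π) w v) := by
      intro v hv
      rw [Finset.mem_sigma] at hv
      obtain ⟨hv1, -⟩ := hv
      rw [hS, Finset.mem_filter] at hv1
      obtain ⟨-, i, hi, hle⟩ := hv1
      rw [Finset.mem_filter]
      refine ⟨Finset.mem_univ _, ⟨i, ⟨0, hπ i⟩⟩, by rw [← hy0]; exact hi, ?_⟩
      obtain ⟨j, t⟩ := v
      have step1 : Relation.ReflTransGen (Gpi le π) ⟨i, ⟨0, hπ i⟩⟩ ⟨j, ⟨0, hπ j⟩⟩ := by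
        by_cases hij : i = j
        · subst hij; exact Relation.ReflTransGen.refl
        · exact Relation.ReflTransGen.single (Or.inl ⟨rfl, rfl, hij, hle⟩)
      have step2 : ∀ (t : ℕ) (ht : t < π j),
          Relation.ReflTransGen (Gpi le π) ⟨j, ⟨0, hπ j⟩⟩ ⟨j, ⟨t, ht⟩⟩ := by
        intro t
        induction t with
        | zero => intro ht; exact Relation.ReflTransGen.refl
        | succ n ih =>
          intro ht
          refine (ih (Nat.lt_of_succ_lt ht)).tail (Or.inr ⟨rfl, ?_, ?_⟩)
          · exact Nat.ne_of_lt (Nat.lt_succ_self n)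
          · exact Nat.mod_eq_of_lt ht
      exact step1.trans (by simpa using step2 t.val t.isLt)
    suffices hS' : ∑ j ∈ S, π j ≤ (Finset.univ.filter (fun v => ∃ w, y w ≠ 0 ∧ Relation.ReflTransGen (Gpi le π) w v)).card by
      convert hS' using 2
      ext; simp [hS]
    calc ∑ j ∈ S, π j
        = (S.sigma (fun j => (Finset.univ : Finset (Fin (π j))))).card := by
          rw [Finset.card_sigma]; simp
      _ ≤ _ := Finset.card_le_card hsub
  exact hC c₁ hc₁ c₂ hc₂ hcne ψ ⟨(key c₁).trans h1, (key c₂).trans h2⟩
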